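/- Let S = k[x_1,...,x_n] and let B_L be the S-module with presentation matrix [d_2^L X], where d_2^L is the second Koszul differential on the variables x_1,...,x_m (a binomial(m,2) × binomial(m,3) matrix) and X = [x_{m+1}·Id x_{m+2}·Id ... x_n·Id] with Id the identity matrix of size binomial(m,2). Then the annihilator of B_L equals the ideal (x_{m+1},...,x_n), provided m ≥ 2. -/

import Mathlib

set_option linter.unusedSectionVars false
set_option linter.unnecessarySimpa false


noncomputable section

open MvPolynomial

variable (K : Type) [Field K] [CharZero K] (n m : ℕ)

/-- Index set for the standard basis of `Λ² k^m`: pairs `i < j`. -/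
abbrev Pairs (m : ℕ) := {p : Fin m × Fin m // p.1 < p.2}

/-- Index set for the standard basis of `Λ³ k^m`: triples `i < j < k`. -/
abbrev Triples (m : ℕ) := {t : Fin m × Fin m × Fin m // t.1 < t.2.1 ∧ t.2.1 < t.2.2}

/-- The presentation matrix `[d₂^L  X]` : its columns are indexed by triples
(the Koszul relations `x_a e_{bc} - x_b e_{ac} + x_c e_{ab}`) together with
pairs `(r, p)` (the relations `x_{m+r} e_p`). -/
def presMatrix (hmn : m ≤ n) :
    Matrix (Pairs m) (Triples m ⊕ (Fin (n - m) × Pairs m)) (MvPolynomial (Fin n) K) :=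
  fun p c =>
    Sum.elim
      (fun t : Triples m =>
        if p.1 = (t.1.2.1, t.1.2.2) then X (Fin.castLE hmn t.1.1)
        else if p.1 = (t.1.1, t.1.2.2) then -X (Fin.castLE hmn t.1.2.1)
        else if p.1 = (t.1.1, t.1.2.1) then X (Fin.castLE hmn t.1.2.2)
        else 0)
      (fun rp : Fin (n - m) × Pairs m =>
        if p = rp.2 then X (⟨m + rp.1, by omega⟩ : Fin n) else 0)
      c

namespace AnnBLAux

variable {K n m}

def phi (K : Type) [Field K] (n m : ℕ) :
    MvPolynomial (Fin n) K →ₐ[K] MvPolynomial (Fin n) K :=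
  aeval fun i : Fin n => if (i : ℕ) < m then X i else 0

lemma phi_X_lt {i : Fin n} (h : (i : ℕ) < m) : phi K n m (X i) = X i := by
  simp [phi, h]

lemma phi_X_ge {i : Fin n} (h : m ≤ (i : ℕ)) : phi K n m (X i) = 0 := by
  simp [phi, Nat.not_lt.2 h]

lemma sub_phi_mem (f : MvPolynomial (Fin n) K) :
    f - phi K n m f ∈
      Ideal.span {z : MvPolynomial (Fin n) K | ∃ i : Fin n, m ≤ (i : ℕ) ∧ z = X i} := by
  induction f using MvPolynomial.induction_on with
  | C a => simp [phi]
  | add p q hp hq =>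
      rw [map_add]
      have := Ideal.add_mem _ hp hq
      convert this using 1; ring
  | mul_X p i hp =>
      rw [map_mul]
      by_cases h : (i : ℕ) < m
      · rw [phi_X_lt h]
        have he : p * X i - phi K n m p * X i = (p - phi K n m p) * X i := by ring
        rw [he]
        exact Ideal.mul_mem_right _ _ hp
      · rw [phi_X_ge (Nat.not_lt.1 h), mul_zero, sub_zero]
        exact Ideal.mul_mem_left _ _ (Ideal.subset_span ⟨i, Nat.not_lt.1 h, rfl⟩)

def fin1 (hm : 2 ≤ m) : Fin m := ⟨1, by omega⟩

def cf (K : Type) [Field K] (n : ℕ) (hm : 2 ≤ m) (hmn : m ≤ n) (q : Pairs m) :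
    MvPolynomial (Fin n) K :=
  (if q.1.2 = fin1 hm then X (Fin.castLE hmn q.1.1) else 0)
  - (if q.1.1 = fin1 hm then X (Fin.castLE hmn q.1.2) else 0)

lemma cancel {R : Type} [CommRing R] (xa xb xc : R) (pa pb pc : Prop)
    [Decidable pa] [Decidable pb] [Decidable pc] :
    xa * ((if pc then xb else 0) - (if pb then xc else 0))
      + -xb * ((if pc then xa else 0) - (if pa then xc else 0))
      + xc * ((if pb then xa else 0) - (if pa then xb else 0)) = 0 := by
  split_ifs <;> ring

lemma key_col (hm : 2 ≤ m) (hmn : m ≤ n)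
    (c : Triples m ⊕ (Fin (n - m) × Pairs m)) :
    ∑ q : Pairs m, phi K n m (presMatrix K n m hmn q c) * cf K n hm hmn q = 0 := by
  rcases c with t | rp
  · rcases t with ⟨⟨a, b, c⟩, hab, hbc⟩
    have hφ : ∀ j : Fin m, phi K n m (X (Fin.castLE hmn j)) = X (Fin.castLE hmn j) :=
      fun j => phi_X_lt (by simpa using j.isLt)
    have hsplit : ∀ q : Pairs m,
        phi K n m (presMatrix K n m hmn q (Sum.inl ⟨(a, b, c), hab, hbc⟩)) * cf K n hm hmn q
        = (if q = (⟨(b, c), hbc⟩ : Pairs m) then X (Fin.castLE hmn a) * cf K n hm hmn q else 0)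
          + (if q = (⟨(a, c), hab.trans hbc⟩ : Pairs m) then
              -X (Fin.castLE hmn b) * cf K n hm hmn q else 0)
          + (if q = (⟨(a, b), hab⟩ : Pairs m) then X (Fin.castLE hmn c) * cf K n hm hmn q else 0) := by
      rintro ⟨⟨q1, q2⟩, hq⟩
      simp only [presMatrix, Sum.elim_inl, apply_ite (phi K n m), map_neg, map_zero, hφ,
        Subtype.mk.injEq, Prod.mk.injEq]
      split_ifs <;> try ring
      all_goals exfalso
      all_goals simp_all only [Prod.mk.injEq, Fin.ext_iff, Fin.lt_def, not_and]
      all_goals omega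
    rw [Finset.sum_congr rfl fun q _ => hsplit q]
    simp only [Finset.sum_add_distrib, Finset.sum_ite_eq' Finset.univ, Finset.mem_univ, if_true]
    exact cancel (X (Fin.castLE hmn a)) (X (Fin.castLE hmn b)) (X (Fin.castLE hmn c))
      (a = fin1 hm) (b = fin1 hm) (c = fin1 hm)
  · have hz : ∀ q : Pairs m,
        phi K n m (presMatrix K n m hmn q (Sum.inr rp)) = 0 := by
      intro q
      have h0 : phi K n m (X (⟨m + (rp.1 : ℕ), by omega⟩ : Fin n)) = 0 :=
        phi_X_ge (by simp)
      simp [presMatrix, apply_ite (phi K n m), h0]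
    simp [hz]

end AnnBLAux

/-- The module `B_L`: the cokernel of the presentation matrix `[d₂^L  X]`. -/
def BL (hmn : m ≤ n) : Type :=
  (Pairs m → MvPolynomial (Fin n) K) ⧸
    LinearMap.range (Matrix.mulVecLin (presMatrix K n m hmn))

instance (hmn : m ≤ n) : AddCommGroup (BL K n m hmn) :=
  inferInstanceAs (AddCommGroup ((Pairs m → MvPolynomial (Fin n) K) ⧸
    LinearMap.range (Matrix.mulVecLin (presMatrix K n m hmn))))

instance (hmn : m ≤ n) : Module (MvPolynomial (Fin n) K) (BL K n m hmn) :=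
  inferInstanceAs (Module (MvPolynomial (Fin n) K)
    ((Pairs m → MvPolynomial (Fin n) K) ⧸
      LinearMap.range (Matrix.mulVecLin (presMatrix K n m hmn))))

open AnnBLAux

/-- Let `S = k[x_1,...,x_n]` and `B_L` the `S`-module with presentation matrix
`[d₂^L  X]`, where `d₂^L` is the second Koszul differential on `x_1,...,x_m`
and `X = [x_{m+1}·Id ⋯ x_n·Id]`.  If `2 ≤ m ≤ n`, then the annihilator of
`B_L` is the ideal `(x_{m+1}, ..., x_n)`. -/
theorem annihilator_BL (hm : 2 ≤ m) (hmn : m ≤ n) :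
    Module.annihilator (MvPolynomial (Fin n) K) (BL K n m hmn) =
      Ideal.span {z | ∃ i : Fin n, m ≤ (i : ℕ) ∧ z = X i} := by
  apply le_antisymm
  · intro f hf
    have h0lt : 0 < m := by omega
    have hple : (⟨0, h0lt⟩ : Fin m) < fin1 hm := by
      simp [fin1, Fin.mk_lt_mk]
    set i0 : Fin m := ⟨0, h0lt⟩ with hi0
    set p : Pairs m := ⟨(i0, fin1 hm), hple⟩ with hp
    have h0 := Module.mem_annihilator.1 hf
      (Submodule.Quotient.mk (Pi.single p (1 : MvPolynomial (Fin n) K)))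
    replace h0 : Submodule.Quotient.mk (p := LinearMap.range (Matrix.mulVecLin (presMatrix K n m hmn)))
        (f • Pi.single p (1 : MvPolynomial (Fin n) K)) = 0 := h0
    rw [Submodule.Quotient.mk_eq_zero] at h0
    obtain ⟨u, hu⟩ := h0
    have hcomp : ∀ q : Pairs m,
        (∑ c, presMatrix K n m hmn q c * u c) = f * (Pi.single p 1 : Pairs m → MvPolynomial (Fin n) K) q := by
      intro q
      have := congrFun hu q
      simpa [Matrix.mulVecLin_apply, Matrix.mulVec, dotProduct] using this
    have hE : phi K n m f * X (Fin.castLE hmn i0) = 0 := by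
      have h1 : ∑ q : Pairs m, phi K n m (∑ c, presMatrix K n m hmn q c * u c) * cf K n hm hmn q
          = ∑ q : Pairs m, phi K n m (f * (Pi.single p 1 : Pairs m → MvPolynomial (Fin n) K) q) * cf K n hm hmn q :=
        Finset.sum_congr rfl fun q _ => by rw [hcomp q]
      have hL : ∑ q : Pairs m, phi K n m (∑ c, presMatrix K n m hmn q c * u c) * cf K n hm hmn q
          = 0 := by
        simp_rw [map_sum, map_mul, Finset.sum_mul]
        rw [Finset.sum_comm]
        refine Finset.sum_eq_zero fun c _ => ?_
        have : ∀ q : Pairs m,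
            phi K n m (presMatrix K n m hmn q c) * phi K n m (u c) * cf K n hm hmn q
              = phi K n m (u c) * (phi K n m (presMatrix K n m hmn q c) * cf K n hm hmn q) := by
          intro q; ring
        rw [Finset.sum_congr rfl fun q _ => this q, ← Finset.mul_sum, key_col hm hmn c, mul_zero]
      have hR : ∑ q : Pairs m, phi K n m (f * (Pi.single p 1 : Pairs m → MvPolynomial (Fin n) K) q) * cf K n hm hmn q
          = phi K n m f * X (Fin.castLE hmn i0) := by
        have hsingle : ∀ q : Pairs m, (Pi.single p 1 : Pairs m → MvPolynomial (Fin n) K) q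
            = if q = p then 1 else 0 := fun q => Pi.single_apply p 1 q
        simp_rw [hsingle, mul_ite, mul_one, mul_zero, apply_ite (phi K n m), map_zero, ite_mul,
          zero_mul]
        rw [Finset.sum_ite_eq' Finset.univ p]
        simp only [Finset.mem_univ, if_true]
        have hcf : cf K n hm hmn p = X (Fin.castLE hmn i0) := by
          have h01 : ¬ (i0 = fin1 hm) := by
            simp [hi0, fin1, Fin.ext_iff]
          simp [cf, hp, h01]
        rw [hcf]
      rw [← hR, ← h1, hL]
    have hphi : phi K n m f = 0 := by
      rcases mul_eq_zero.1 hE with h | h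
      · exact h
      · exact absurd h (MvPolynomial.X_ne_zero _)
    have := sub_phi_mem (m := m) f
    rw [hphi, sub_zero] at this
    exact this
  · rw [Ideal.span_le]
    rintro z ⟨i, hi, rfl⟩
    rw [SetLike.mem_coe, Module.mem_annihilator]
    intro b
    obtain ⟨v, rfl⟩ := Submodule.Quotient.mk_surjective _ b
    show Submodule.Quotient.mk (p := LinearMap.range (Matrix.mulVecLin (presMatrix K n m hmn)))
      (X i • v) = 0
    rw [Submodule.Quotient.mk_eq_zero]
    refine ⟨Sum.elim (fun _ => 0)
      (fun rp => if rp.1 = (⟨(i : ℕ) - m, by omega⟩ : Fin (n - m)) then v rp.2 else 0), ?_⟩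
    funext q
    have hfix : (⟨m + ((i : ℕ) - m), by omega⟩ : Fin n) = i := Fin.ext (by simp; omega)
    simp [Matrix.mulVecLin_apply, Matrix.mulVec, dotProduct, presMatrix,
      Fintype.sum_sum_type, Fintype.sum_prod_type, ite_mul, mul_ite, mul_zero, zero_mul,
      Finset.sum_ite_eq, Finset.sum_ite_eq', hfix]


end
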